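/- Under Assumption 1, let z₁ ∈ (0,H) and let c : ℝ → ℝ² be a characteristic curve defined on all of ℝ with c(0) = (r_o, z₁), and suppose there is a compact set K ⊆ (0,R)×(0,H) with c(t) ∈ K for all t ∈ ℝ. Then the characteristic curve through (r_o, z₁) is a closed curve: there exists T > 0 with c(T) = c(0). (This is the paper's Lemma that characteristic curves through the line r = r_o that remain in the open interior of the domain are closed curves.) -/

import Mathlib

open Set Filter

/-- Circulation `Γ(r,z) = r·φ(r)·ψ(z)`. -/
noncomputable def circ (φ ψ : ℝ → ℝ) (p : ℝ × ℝ) : ℝ := p.1 * φ p.1 * ψ p.2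

/-- Vertical vorticity `ζ(r,z) = g'(r)·ψ(z)/r` where `g(r) = r·φ(r)`. -/
noncomputable def zeta (φ ψ : ℝ → ℝ) (r z : ℝ) : ℝ :=
  deriv (fun s => s * φ s) r * ψ z / r

/-- Radial vorticity `η(r,z) = −φ(r)·ψ'(z)`. -/
noncomputable def eta (φ ψ : ℝ → ℝ) (r z : ℝ) : ℝ := -(φ r * deriv ψ z)

/-- A characteristic curve on an interval `I`: a differentiable curve
`c(t) = (r(t), z(t))` with `r(t) > 0` satisfying `r' = η(r,z)`, `z' = ζ(r,z)` on `I`. -/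
def IsCharCurve (φ ψ : ℝ → ℝ) (I : Set ℝ) (c : ℝ → ℝ × ℝ) : Prop :=
  (∀ t ∈ I, 0 < (c t).1) ∧
  ∀ t ∈ I,
    HasDerivWithinAt c
      (eta φ ψ (c t).1 (c t).2, zeta φ ψ (c t).1 (c t).2) I t

/-- If a differentiable function converges at infinity and its derivative converges,
then the derivative limit is zero. -/
lemma deriv_tendsto_zero_aux {f f' : ℝ → ℝ} (hf : ∀ t, HasDerivAt f (f' t) t)
    {L m : ℝ} (hL : Tendsto f atTop (nhds L)) (hm : Tendsto f' atTop (nhds m)) : m = 0 := by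
  have h1 : ∀ n : ℕ, ∃ ξ ∈ Set.Ioo (n : ℝ) ((n : ℝ) + 1),
      f' ξ = (f ((n : ℝ) + 1) - f n) / (((n : ℝ) + 1) - n) := by
    intro n
    exact exists_hasDerivAt_eq_slope f f' (by linarith)
      (fun x _ => (hf x).continuousAt.continuousWithinAt) (fun x _ => hf x)
  choose ξ hξ hξ' using h1
  have hξtop : Tendsto ξ atTop atTop :=
    tendsto_atTop_mono (fun n => (hξ n).1.le) tendsto_natCast_atTop_atTop
  have h2 : Tendsto (fun n : ℕ => f' (ξ n)) atTop (nhds m) := hm.comp hξtop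
  have h3 : Tendsto (fun n : ℕ => (f ((n : ℝ) + 1) - f n) / (((n : ℝ) + 1) - n)) atTop
      (nhds 0) := by
    have ha : Tendsto (fun n : ℕ => f ((n : ℝ) + 1)) atTop (nhds L) :=
      hL.comp (tendsto_atTop_add_const_right _ 1 tendsto_natCast_atTop_atTop)
    have hb : Tendsto (fun n : ℕ => f (n : ℝ)) atTop (nhds L) :=
      hL.comp tendsto_natCast_atTop_atTop
    have := ha.sub hb
    simp only [sub_self] at this
    refine this.congr (fun n => ?_)
    norm_num
  have h4 : Tendsto (fun n : ℕ => f' (ξ n)) atTop (nhds 0) := h3.congr (fun n => (hξ' n).symm)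
  exact tendsto_nhds_unique h2 h4

/-- Generic quarter-turn lemma. -/
lemma phase_lemma
    (K : Set (ℝ × ℝ)) (hK : IsCompact K)
    (F : ℝ × ℝ → ℝ × ℝ) (hF : ContinuousOn F K)
    (a b : ℝ)
    (hs1 : ∀ p ∈ K, p.2 < b → (F p).1 < 0)
    (hs2 : ∀ p ∈ K, p.1 < a → 0 < (F p).2)
    (hz : ∀ p ∈ K, F p = 0 → p.1 = a)
    (x y : ℝ → ℝ)
    (hx : ∀ t, HasDerivAt x ((F (x t, y t)).1) t)
    (hy : ∀ t, HasDerivAt y ((F (x t, y t)).2) t)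
    (hmem : ∀ t, (x t, y t) ∈ K)
    (s : ℝ) (h1 : x s ≤ a) (h2 : y s < b) :
    ∃ t, s < t ∧ y t = b ∧ x t < a := by
  have hxc : Continuous x := by
    have : Differentiable ℝ x := fun t => (hx t).differentiableAt
    exact this.continuous
  have hyc : Continuous y := by
    have : Differentiable ℝ y := fun t => (hy t).differentiableAt
    exact this.continuous
  -- Claim A: y reaches b at some time after s
  have claimA : ∃ t, s < t ∧ y t = b := by
    by_contra hA
    push_neg at hA
    have hyb : ∀ t, s ≤ t → y t < b := by
      intro t ht
      rcases eq_or_lt_of_le ht with hts | hts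
      · rwa [← hts]
      by_contra hge
      push_neg at hge
      have : b ∈ Icc (y s) (y t) := ⟨h2.le, hge⟩
      obtain ⟨u, hu, hyu⟩ := intermediate_value_Icc ht hyc.continuousOn this
      have hus : s < u := by
        rcases eq_or_lt_of_le hu.1 with h | h
        · exact absurd (h ▸ hyu) (ne_of_lt h2)
        · exact h
      exact hA u hus hyu
    have hanti : StrictAntiOn x (Ici s) := by
      refine strictAntiOn_of_deriv_neg (convex_Ici s) hxc.continuousOn (fun t ht => ?_)
      rw [interior_Ici] at ht
      rw [(hx t).deriv]
      exact hs1 _ (hmem t) (hyb t ht.le)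
    have hxa : ∀ t, s + 1 ≤ t → x t < a := by
      intro t ht
      have h1' : x (s + 1) < x s := hanti self_mem_Ici (mem_Ici.2 (by linarith)) (by linarith)
      rcases eq_or_lt_of_le ht with h | h
      · rw [← h]; linarith
      · have : x t < x (s + 1) := hanti (mem_Ici.2 (by linarith)) (mem_Ici.2 (by linarith)) h
        linarith
    have hmono : StrictMonoOn y (Ici (s + 1)) := by
      refine strictMonoOn_of_deriv_pos (convex_Ici _) hyc.continuousOn (fun t ht => ?_)
      rw [interior_Ici] at ht
      rw [(hy t).deriv]
      exact hs2 _ (hmem t) (hxa t ht.le)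
    -- monotone limits
    set X : ℝ → ℝ := fun t => x (max t (s + 1)) with hX
    set Y : ℝ → ℝ := fun t => y (max t (s + 1)) with hY
    have hXanti : Antitone X := by
      intro u v huv
      rcases eq_or_lt_of_le (max_le_max huv (le_refl (s + 1))) with h | h
      · simp only [hX]; rw [h]
      · exact (hanti (mem_Ici.2 (le_trans (by linarith) (le_max_right u (s+1))))
          (mem_Ici.2 (le_trans (by linarith) (le_max_right v (s+1)))) h).le
    have hYmono : Monotone Y := by
      intro u v huv
      rcases eq_or_lt_of_le (max_le_max huv (le_refl (s + 1))) with h | h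
      · simp only [hY]; rw [h]
      · exact (hmono (mem_Ici.2 (le_max_right _ _)) (mem_Ici.2 (le_max_right _ _)) h).le
    have hXbdd : BddBelow (range X) := by
      refine BddBelow.mono ?_ (hK.image continuous_fst).bddBelow
      rintro w ⟨t, rfl⟩
      exact ⟨(x (max t (s+1)), y (max t (s+1))), hmem _, rfl⟩
    have hYbdd : BddAbove (range Y) := by
      refine BddAbove.mono ?_ (hK.image continuous_snd).bddAbove
      rintro w ⟨t, rfl⟩
      exact ⟨(x (max t (s+1)), y (max t (s+1))), hmem _, rfl⟩
    have hXlim : Tendsto X atTop (nhds (⨅ t, X t)) := tendsto_atTop_ciInf hXanti hXbdd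
    have hYlim : Tendsto Y atTop (nhds (⨆ t, Y t)) := tendsto_atTop_ciSup hYmono hYbdd
    set L := ⨅ t, X t
    set M := ⨆ t, Y t
    have heq : ∀ᶠ t in atTop, X t = x t := by
      filter_upwards [eventually_ge_atTop (s + 1)] with t ht
      simp [hX, max_eq_left ht]
    have heq' : ∀ᶠ t in atTop, Y t = y t := by
      filter_upwards [eventually_ge_atTop (s + 1)] with t ht
      simp [hY, max_eq_left ht]
    have hxlim : Tendsto x atTop (nhds L) := hXlim.congr' heq
    have hylim : Tendsto y atTop (nhds M) := hYlim.congr' heq'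
    have hclim : Tendsto (fun t => (x t, y t)) atTop (nhds (L, M)) := hxlim.prodMk_nhds hylim
    have hpK : (L, M) ∈ K :=
      hK.isClosed.mem_of_tendsto hclim (Eventually.of_forall hmem)
    have hFlim : Tendsto (fun t => F (x t, y t)) atTop (nhds (F (L, M))) := by
      have h5 : Tendsto (fun t => (x t, y t)) atTop (nhdsWithin (L, M) K) :=
        tendsto_nhdsWithin_of_tendsto_nhds_of_eventually_within _ hclim
          (Eventually.of_forall hmem)
      exact (hF _ hpK).tendsto.comp h5
    have hF1 : (F (L, M)).1 = 0 :=
      deriv_tendsto_zero_aux hx hxlim ((continuous_fst.tendsto _).comp hFlim)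
    have hF2 : (F (L, M)).2 = 0 :=
      deriv_tendsto_zero_aux hy hylim ((continuous_snd.tendsto _).comp hFlim)
    have hLa : L = a := hz _ hpK (Prod.ext hF1 hF2)
    have hLle : L ≤ x (s + 2) := by
      refine le_of_tendsto hxlim ?_
      filter_upwards [eventually_ge_atTop (s + 2)] with t ht
      rcases eq_or_lt_of_le ht with h | h
      · rw [h]
      · exact (hanti (mem_Ici.2 (by linarith)) (mem_Ici.2 (by linarith)) h).le
    have : x (s + 2) < a := hxa _ (by linarith)
    linarith
  obtain ⟨t₀, ht₀, hyt₀⟩ := claimA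
  set S := {t : ℝ | s ≤ t ∧ y t = b} with hS
  have hSclosed : IsClosed S := by
    have : S = Ici s ∩ y ⁻¹' {b} := by
      ext t; simp [hS]
    rw [this]
    exact isClosed_Ici.inter ((isClosed_singleton.preimage hyc))
  have hSne : S.Nonempty := ⟨t₀, ht₀.le, hyt₀⟩
  have hSbdd : BddBelow S := ⟨s, fun t ht => ht.1⟩
  set t₁ := sInf S with ht₁def
  have ht₁S : t₁ ∈ S := hSclosed.csInf_mem hSne hSbdd
  have ht₁s : s < t₁ := by
    rcases eq_or_lt_of_le ht₁S.1 with h | h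
    · exact absurd (h ▸ ht₁S.2) (ne_of_lt h2)
    · exact h
  have hlt : ∀ u, s ≤ u → u < t₁ → y u < b := by
    intro u hsu hu
    by_contra hge
    push_neg at hge
    rcases eq_or_lt_of_le hge with h | h
    · exact absurd (csInf_le hSbdd ⟨hsu, h.symm⟩) (not_le_of_gt hu)
    · obtain ⟨w, hw, hyw⟩ := intermediate_value_Icc hsu hyc.continuousOn ⟨h2.le, hge⟩
      exact absurd (csInf_le hSbdd ⟨hw.1, hyw⟩) (not_le_of_gt (lt_of_le_of_lt hw.2 hu))
  have hanti : StrictAntiOn x (Icc s t₁) := by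
    refine strictAntiOn_of_deriv_neg (convex_Icc s t₁) hxc.continuousOn (fun u hu => ?_)
    rw [interior_Icc] at hu
    rw [(hx u).deriv]
    exact hs1 _ (hmem u) (hlt u hu.1.le hu.2)
  have : x t₁ < x s := hanti (left_mem_Icc.2 ht₁s.le) (right_mem_Icc.2 ht₁s.le) ht₁s
  exact ⟨t₁, ht₁s, ht₁S.2, by linarith⟩

/-- Scalar-component version of the quarter-turn lemma. -/
lemma phase_lemma'
    (K : Set (ℝ × ℝ)) (hK : IsCompact K)
    (fx fy : ℝ × ℝ → ℝ) (hfx : ContinuousOn fx K) (hfy : ContinuousOn fy K)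
    (a b : ℝ)
    (hs1 : ∀ p ∈ K, p.2 < b → fx p < 0)
    (hs2 : ∀ p ∈ K, p.1 < a → 0 < fy p)
    (hz : ∀ p ∈ K, fx p = 0 → fy p = 0 → p.1 = a)
    (x y : ℝ → ℝ)
    (hx : ∀ t, HasDerivAt x (fx (x t, y t)) t)
    (hy : ∀ t, HasDerivAt y (fy (x t, y t)) t)
    (hmem : ∀ t, (x t, y t) ∈ K)
    (s : ℝ) (h1 : x s ≤ a) (h2 : y s < b) :
    ∃ t, s < t ∧ y t = b ∧ x t < a :=
  phase_lemma K hK (fun p => (fx p, fy p)) (hfx.prodMk hfy) a b hs1 hs2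
    (fun p hp h0 => hz p hp (congrArg Prod.fst h0) (congrArg Prod.snd h0))
    x y hx hy hmem s h1 h2

/-- Full loop lemma: the curve returns to the line `x = a` below `b`. -/
lemma full_loop
    (K : Set (ℝ × ℝ)) (hK : IsCompact K)
    (fx fy : ℝ × ℝ → ℝ) (hfx : ContinuousOn fx K) (hfy : ContinuousOn fy K)
    (a b : ℝ)
    (hs1 : ∀ p ∈ K, p.2 < b → fx p < 0)
    (hs2 : ∀ p ∈ K, b < p.2 → 0 < fx p)
    (hs3 : ∀ p ∈ K, p.1 < a → 0 < fy p)
    (hs4 : ∀ p ∈ K, a < p.1 → fy p < 0)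
    (hz : ∀ p ∈ K, fx p = 0 → fy p = 0 → p = (a, b))
    (x y : ℝ → ℝ)
    (hx : ∀ t, HasDerivAt x (fx (x t, y t)) t)
    (hy : ∀ t, HasDerivAt y (fy (x t, y t)) t)
    (hmem : ∀ t, (x t, y t) ∈ K)
    (h1 : x 0 = a) (h2 : y 0 < b) :
    ∃ T, 0 < T ∧ x T = a ∧ y T < b := by
  -- Phase 1
  obtain ⟨t₁, ht₁0, hy₁, hx₁⟩ :=
    phase_lemma' K hK fx fy hfx hfy a b hs1 hs3
      (fun p hp e1 e2 => by rw [hz p hp e1 e2]) x y hx hy hmem 0 h1.le h2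
  -- Phase 2 : transformed curve (2b - y, x), center (b, a)
  have phase2 : ∃ t, t₁ < t ∧ x t = a ∧ b < y t := by
    have hK₂ : IsCompact ((fun p : ℝ × ℝ => ((2*b - p.2 : ℝ), p.1)) '' K) :=
      hK.image (by fun_prop)
    have hmaps : MapsTo (fun q : ℝ × ℝ => (q.2, (2*b - q.1 : ℝ)))
        ((fun p : ℝ × ℝ => ((2*b - p.2 : ℝ), p.1)) '' K) K := by
      rintro q ⟨⟨p1, p2⟩, hp, rfl⟩
      show ((p1 : ℝ), (2*b - (2*b - p2) : ℝ)) ∈ K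
      rw [show (2*b - (2*b - p2) : ℝ) = p2 from by ring]
      exact hp
    obtain ⟨t₂, ht₂, hy₂, hx₂⟩ :=
      phase_lemma' _ hK₂
        (fun q => -fy (q.2, 2*b - q.1)) (fun q => fx (q.2, 2*b - q.1))
        ((hfy.comp (by fun_prop) hmaps).neg) (hfx.comp (by fun_prop) hmaps)
        b a
        (by
          rintro q ⟨⟨p1, p2⟩, hp, rfl⟩ hlt
          have hlt' : p1 < a := hlt
          show -fy ((p1 : ℝ), (2*b - (2*b - p2) : ℝ)) < 0
          rw [show (2*b - (2*b - p2) : ℝ) = p2 from by ring]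
          linarith [hs3 (p1, p2) hp hlt'])
        (by
          rintro q ⟨⟨p1, p2⟩, hp, rfl⟩ hlt
          have hlt' : 2*b - p2 < b := hlt
          show 0 < fx ((p1 : ℝ), (2*b - (2*b - p2) : ℝ))
          rw [show (2*b - (2*b - p2) : ℝ) = p2 from by ring]
          exact hs2 (p1, p2) hp (by linarith))
        (by
          rintro q ⟨⟨p1, p2⟩, hp, rfl⟩ e1 e2
          have e1' : -fy ((p1 : ℝ), (2*b - (2*b - p2) : ℝ)) = 0 := e1
          have e2' : fx ((p1 : ℝ), (2*b - (2*b - p2) : ℝ)) = 0 := e2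
          rw [show (2*b - (2*b - p2) : ℝ) = p2 from by ring] at e1' e2'
          have h := hz (p1, p2) hp e2' (neg_eq_zero.mp e1')
          show 2*b - p2 = b
          have : p2 = b := congrArg Prod.snd h
          rw [this]; ring)
        (fun t => 2*b - y t) x
        (by
          intro t
          show HasDerivAt _ (-fy (x t, 2*b - (2*b - y t))) t
          rw [show (2*b - (2*b - y t) : ℝ) = y t from by ring]
          exact (hy t).const_sub (2*b))
        (by
          intro t
          show HasDerivAt _ (fx (x t, 2*b - (2*b - y t))) t
          rw [show (2*b - (2*b - y t) : ℝ) = y t from by ring]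
          exact hx t)
        (fun t => ⟨(x t, y t), hmem t, rfl⟩)
        t₁ (by show 2*b - y t₁ ≤ b; rw [hy₁]; linarith) hx₁
    refine ⟨t₂, ht₂, hy₂, ?_⟩
    have : (2*b - y t₂ : ℝ) < b := hx₂
    linarith
  obtain ⟨t₂, ht₂, hx₂, hy₂⟩ := phase2
  -- Phase 3 : reflected curve (2a - x, 2b - y), center (a, b)
  have phase3 : ∃ t, t₂ < t ∧ y t = b ∧ a < x t := by
    have hK₃ : IsCompact ((fun p : ℝ × ℝ => ((2*a - p.1 : ℝ), (2*b - p.2 : ℝ))) '' K) :=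
      hK.image (by fun_prop)
    have hmaps : MapsTo (fun q : ℝ × ℝ => ((2*a - q.1 : ℝ), (2*b - q.2 : ℝ)))
        ((fun p : ℝ × ℝ => ((2*a - p.1 : ℝ), (2*b - p.2 : ℝ))) '' K) K := by
      rintro q ⟨⟨p1, p2⟩, hp, rfl⟩
      show ((2*a - (2*a - p1) : ℝ), (2*b - (2*b - p2) : ℝ)) ∈ K
      rw [show (2*a - (2*a - p1) : ℝ) = p1 from by ring,
        show (2*b - (2*b - p2) : ℝ) = p2 from by ring]
      exact hp
    obtain ⟨t₃, ht₃, hy₃, hx₃⟩ :=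
      phase_lemma' _ hK₃
        (fun q => -fx (2*a - q.1, 2*b - q.2)) (fun q => -fy (2*a - q.1, 2*b - q.2))
        ((hfx.comp (by fun_prop) hmaps).neg) ((hfy.comp (by fun_prop) hmaps).neg)
        a b
        (by
          rintro q ⟨⟨p1, p2⟩, hp, rfl⟩ hlt
          have hlt' : 2*b - p2 < b := hlt
          show -fx ((2*a - (2*a - p1) : ℝ), (2*b - (2*b - p2) : ℝ)) < 0
          rw [show (2*a - (2*a - p1) : ℝ) = p1 from by ring,
            show (2*b - (2*b - p2) : ℝ) = p2 from by ring]
          linarith [hs2 (p1, p2) hp (show b < p2 by linarith)])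
        (by
          rintro q ⟨⟨p1, p2⟩, hp, rfl⟩ hlt
          have hlt' : 2*a - p1 < a := hlt
          show 0 < -fy ((2*a - (2*a - p1) : ℝ), (2*b - (2*b - p2) : ℝ))
          rw [show (2*a - (2*a - p1) : ℝ) = p1 from by ring,
            show (2*b - (2*b - p2) : ℝ) = p2 from by ring]
          linarith [hs4 (p1, p2) hp (show a < p1 by linarith)])
        (by
          rintro q ⟨⟨p1, p2⟩, hp, rfl⟩ e1 e2
          have e1' : -fx ((2*a - (2*a - p1) : ℝ), (2*b - (2*b - p2) : ℝ)) = 0 := e1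
          have e2' : -fy ((2*a - (2*a - p1) : ℝ), (2*b - (2*b - p2) : ℝ)) = 0 := e2
          rw [show (2*a - (2*a - p1) : ℝ) = p1 from by ring,
            show (2*b - (2*b - p2) : ℝ) = p2 from by ring] at e1' e2'
          have h := hz (p1, p2) hp (neg_eq_zero.mp e1') (neg_eq_zero.mp e2')
          show 2*a - p1 = a
          have : p1 = a := congrArg Prod.fst h
          rw [this]; ring)
        (fun t => 2*a - x t) (fun t => 2*b - y t)
        (by
          intro t
          show HasDerivAt _ (-fx (2*a - (2*a - x t), 2*b - (2*b - y t))) t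
          rw [show (2*a - (2*a - x t) : ℝ) = x t from by ring,
            show (2*b - (2*b - y t) : ℝ) = y t from by ring]
          exact (hx t).const_sub (2*a))
        (by
          intro t
          show HasDerivAt _ (-fy (2*a - (2*a - x t), 2*b - (2*b - y t))) t
          rw [show (2*a - (2*a - x t) : ℝ) = x t from by ring,
            show (2*b - (2*b - y t) : ℝ) = y t from by ring]
          exact (hy t).const_sub (2*b))
        (fun t => ⟨(x t, y t), hmem t, rfl⟩)
        t₂ (by show 2*a - x t₂ ≤ a; rw [hx₂]; linarith)
        (by show 2*b - y t₂ < b; linarith)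
    refine ⟨t₃, ht₃, ?_, ?_⟩
    · have : (2*b - y t₃ : ℝ) = b := hy₃
      linarith
    · have : (2*a - x t₃ : ℝ) < a := hx₃
      linarith
  obtain ⟨t₃, ht₃, hy₃, hx₃⟩ := phase3
  -- Phase 4 : transformed curve (y, 2a - x), center (b, a)
  have phase4 : ∃ t, t₃ < t ∧ x t = a ∧ y t < b := by
    have hK₄ : IsCompact ((fun p : ℝ × ℝ => (p.2, (2*a - p.1 : ℝ))) '' K) :=
      hK.image (by fun_prop)
    have hmaps : MapsTo (fun q : ℝ × ℝ => ((2*a - q.2 : ℝ), q.1))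
        ((fun p : ℝ × ℝ => (p.2, (2*a - p.1 : ℝ))) '' K) K := by
      rintro q ⟨⟨p1, p2⟩, hp, rfl⟩
      show ((2*a - (2*a - p1) : ℝ), (p2 : ℝ)) ∈ K
      rw [show (2*a - (2*a - p1) : ℝ) = p1 from by ring]
      exact hp
    obtain ⟨t₄, ht₄, hy₄, hx₄⟩ :=
      phase_lemma' _ hK₄
        (fun q => fy (2*a - q.2, q.1)) (fun q => -fx (2*a - q.2, q.1))
        (hfy.comp (by fun_prop) hmaps) ((hfx.comp (by fun_prop) hmaps).neg)
        b a
        (by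
          rintro q ⟨⟨p1, p2⟩, hp, rfl⟩ hlt
          have hlt' : 2*a - p1 < a := hlt
          show fy ((2*a - (2*a - p1) : ℝ), (p2 : ℝ)) < 0
          rw [show (2*a - (2*a - p1) : ℝ) = p1 from by ring]
          exact hs4 (p1, p2) hp (by linarith))
        (by
          rintro q ⟨⟨p1, p2⟩, hp, rfl⟩ hlt
          have hlt' : p2 < b := hlt
          show 0 < -fx ((2*a - (2*a - p1) : ℝ), (p2 : ℝ))
          rw [show (2*a - (2*a - p1) : ℝ) = p1 from by ring]
          linarith [hs1 (p1, p2) hp hlt'])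
        (by
          rintro q ⟨⟨p1, p2⟩, hp, rfl⟩ e1 e2
          have e1' : fy ((2*a - (2*a - p1) : ℝ), (p2 : ℝ)) = 0 := e1
          have e2' : -fx ((2*a - (2*a - p1) : ℝ), (p2 : ℝ)) = 0 := e2
          rw [show (2*a - (2*a - p1) : ℝ) = p1 from by ring] at e1' e2'
          have h := hz (p1, p2) hp (neg_eq_zero.mp e2') e1'
          show p2 = b
          exact congrArg Prod.snd h)
        y (fun t => 2*a - x t)
        (by
          intro t
          show HasDerivAt _ (fy (2*a - (2*a - x t), y t)) t
          rw [show (2*a - (2*a - x t) : ℝ) = x t from by ring]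
          exact hy t)
        (by
          intro t
          show HasDerivAt _ (-fx (2*a - (2*a - x t), y t)) t
          rw [show (2*a - (2*a - x t) : ℝ) = x t from by ring]
          exact (hx t).const_sub (2*a))
        (fun t => ⟨(x t, y t), hmem t, rfl⟩)
        t₃ (le_of_eq hy₃) (by show 2*a - x t₃ < a; linarith)
    refine ⟨t₄, ht₄, ?_, hx₄⟩
    have : (2*a - x t₄ : ℝ) = a := hy₄
    linarith
  obtain ⟨t₄, ht₄, hx₄, hy₄⟩ := phase4
  exact ⟨t₄, by linarith, hx₄, hy₄⟩


/-- If `f 0 = 0`, `f > 0` on `(0,m)` and `f' ≠ 0` there, then `f' > 0` on `(0,m)`. -/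
lemma deriv_pos_left {f : ℝ → ℝ} (hf : Differentiable ℝ f) (hdc : Continuous (deriv f))
    {m : ℝ} (hne : ∀ w ∈ Ioo (0:ℝ) m, deriv f w ≠ 0)
    (h0 : f 0 = 0) (hpos : ∀ w ∈ Ioo (0:ℝ) m, 0 < f w) :
    ∀ w ∈ Ioo (0:ℝ) m, 0 < deriv f w := by
  intro w hw
  by_contra h
  have hneg : deriv f w < 0 := lt_of_le_of_ne (not_lt.mp h) (hne w hw)
  obtain ⟨ξ, hξ, hξ'⟩ := exists_hasDerivAt_eq_slope f (deriv f) hw.1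
    hf.continuous.continuousOn (fun u _ => (hf u).hasDerivAt)
  have hξpos : 0 < deriv f ξ := by
    rw [hξ', h0, sub_zero, sub_zero]
    exact div_pos (hpos w hw) hw.1
  obtain ⟨y, hy, hy0⟩ := intermediate_value_Icc' hξ.2.le hdc.continuousOn
    (⟨hneg.le, hξpos.le⟩ : (0:ℝ) ∈ Icc (deriv f w) (deriv f ξ))
  exact hne y ⟨lt_of_lt_of_le hξ.1 hy.1, lt_of_le_of_lt hy.2 hw.2⟩ hy0

/-- If `f ≤ f m` on `(m,M)` and `f' ≠ 0` there, then `f' < 0` on `(m,M)`. -/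
lemma deriv_neg_right {f : ℝ → ℝ} (hf : Differentiable ℝ f) (hdc : Continuous (deriv f))
    {m M : ℝ} (hne : ∀ w ∈ Ioo m M, deriv f w ≠ 0)
    (hmax : ∀ w ∈ Ioo m M, f w ≤ f m) :
    ∀ w ∈ Ioo m M, deriv f w < 0 := by
  intro w hw
  by_contra h
  have hposw : 0 < deriv f w := lt_of_le_of_ne (not_lt.mp h) (Ne.symm (hne w hw))
  obtain ⟨ξ, hξ, hξ'⟩ := exists_hasDerivAt_eq_slope f (deriv f) hw.1
    hf.continuous.continuousOn (fun u _ => (hf u).hasDerivAt)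
  have hξnonpos : deriv f ξ ≤ 0 := by
    rw [hξ']
    apply div_nonpos_of_nonpos_of_nonneg
    · linarith [hmax w hw]
    · linarith [hw.1]
  have hξneg : deriv f ξ < 0 :=
    lt_of_le_of_ne hξnonpos (hne ξ ⟨hξ.1, hξ.2.trans hw.2⟩)
  obtain ⟨y, hy, hy0⟩ := intermediate_value_Icc hξ.2.le hdc.continuousOn
    (⟨hξneg.le, hposw.le⟩ : (0:ℝ) ∈ Icc (deriv f ξ) (deriv f w))
  exact hne y ⟨lt_of_lt_of_le hξ.1 hy.1, lt_of_le_of_lt hy.2 hw.2⟩ hy0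

/-- Characteristic curves through the line `r = r_o` that remain in a compact subset of
the open interior of the domain are closed curves. -/
theorem characteristic_through_ro_is_closed
    (R H : ℝ) (hR : 0 < R) (hH : 0 < H)
    (φ ψ : ℝ → ℝ)
    (hφC2 : ContDiff ℝ 2 φ) (hψC2 : ContDiff ℝ 2 ψ)
    (hφ0 : φ 0 = 0) (hψ0 : ψ 0 = 0)
    (hφpos : ∀ r ∈ Ioo (0:ℝ) R, 0 < φ r)
    (hψpos : ∀ z ∈ Ioo (0:ℝ) H, 0 < ψ z)
    (r_o : ℝ) (hro : r_o ∈ Ioo (0:ℝ) R)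
    (z_o : ℝ) (hzo : z_o ∈ Ioo (0:ℝ) H)
    (hg'ro : deriv (fun s => s * φ s) r_o = 0)
    (hg'ne : ∀ r ∈ Ioo (0:ℝ) R, r ≠ r_o → deriv (fun s => s * φ s) r ≠ 0)
    (hψ'zo : deriv ψ z_o = 0)
    (hψ'ne : ∀ z ∈ Ioo (0:ℝ) H, z ≠ z_o → deriv ψ z ≠ 0)
    (hgmax : ∀ r ∈ Ioo (0:ℝ) R, r * φ r ≤ r_o * φ r_o)
    (hψmax : ∀ z ∈ Ioo (0:ℝ) H, ψ z ≤ ψ z_o)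
    (z₁ : ℝ) (hz₁ : z₁ ∈ Ioo (0:ℝ) H)
    (c : ℝ → ℝ × ℝ) (hc : IsCharCurve φ ψ univ c)
    (hc0 : c 0 = (r_o, z₁))
    (K : Set (ℝ × ℝ)) (hK : IsCompact K)
    (hKsub : K ⊆ Ioo (0:ℝ) R ×ˢ Ioo (0:ℝ) H)
    (hcK : ∀ t : ℝ, c t ∈ K) :
    ∃ T : ℝ, 0 < T ∧ c T = c 0 := by
  obtain ⟨hpos, hode⟩ := hc
  have hode' : ∀ t, HasDerivAt c (eta φ ψ (c t).1 (c t).2, zeta φ ψ (c t).1 (c t).2) t :=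
    fun t => hasDerivWithinAt_univ.mp (hode t (mem_univ t))
  -- basic differentiability facts
  have hgC : ContDiff ℝ 2 (fun s : ℝ => s * φ s) := contDiff_id.mul hφC2
  have hgd : Differentiable ℝ (fun s : ℝ => s * φ s) := hgC.differentiable (by norm_num)
  have hψd : Differentiable ℝ ψ := hψC2.differentiable (by norm_num)
  have hgdc : Continuous (deriv (fun s : ℝ => s * φ s)) := hgC.continuous_deriv (by norm_num)
  have hψdc : Continuous (deriv ψ) := hψC2.continuous_deriv (by norm_num)
  -- components of the curve
  have hr : ∀ t, HasDerivAt (fun t => (c t).1) (-(φ (c t).1 * deriv ψ (c t).2)) t := by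
    intro t
    have := (ContinuousLinearMap.fst ℝ ℝ ℝ).hasFDerivAt.comp_hasDerivAt t (hode' t)
    simpa [eta, Function.comp_def] using this
  have hzdt : ∀ t, HasDerivAt (fun t => (c t).2)
      (deriv (fun s => s * φ s) (c t).1 * ψ (c t).2 / (c t).1) t := by
    intro t
    have := (ContinuousLinearMap.snd ℝ ℝ ℝ).hasFDerivAt.comp_hasDerivAt t (hode' t)
    simpa [zeta, Function.comp_def] using this
  -- derivative sign facts
  have hψ'pos : ∀ w ∈ Ioo (0:ℝ) z_o, 0 < deriv ψ w :=
    deriv_pos_left hψd hψdc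
      (fun w hw => hψ'ne w ⟨hw.1, hw.2.trans hzo.2⟩ (ne_of_lt hw.2)) hψ0
      (fun w hw => hψpos w ⟨hw.1, hw.2.trans hzo.2⟩)
  have hψ'neg : ∀ w ∈ Ioo z_o H, deriv ψ w < 0 :=
    deriv_neg_right hψd hψdc
      (fun w hw => hψ'ne w ⟨hzo.1.trans hw.1, hw.2⟩ (ne_of_gt hw.1))
      (fun w hw => hψmax w ⟨hzo.1.trans hw.1, hw.2⟩)
  have hg'pos : ∀ w ∈ Ioo (0:ℝ) r_o, 0 < deriv (fun s => s * φ s) w :=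
    deriv_pos_left hgd hgdc
      (fun w hw => hg'ne w ⟨hw.1, hw.2.trans hro.2⟩ (ne_of_lt hw.2)) (by simp)
      (fun w hw => mul_pos hw.1 (hφpos w ⟨hw.1, hw.2.trans hro.2⟩))
  have hg'neg : ∀ w ∈ Ioo r_o R, deriv (fun s => s * φ s) w < 0 :=
    deriv_neg_right hgd hgdc
      (fun w hw => hg'ne w ⟨hro.1.trans hw.1, hw.2⟩ (ne_of_gt hw.1))
      (fun w hw => hgmax w ⟨hro.1.trans hw.1, hw.2⟩)
  -- strict monotonicity
  have hψmono : StrictMonoOn ψ (Icc 0 z_o) :=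
    strictMonoOn_of_deriv_pos (convex_Icc _ _) hψd.continuous.continuousOn
      (fun w hw => hψ'pos w (by rwa [interior_Icc] at hw))
  have hψanti : StrictAntiOn ψ (Icc z_o H) :=
    strictAntiOn_of_deriv_neg (convex_Icc _ _) hψd.continuous.continuousOn
      (fun w hw => hψ'neg w (by rwa [interior_Icc] at hw))
  have hgmono : StrictMonoOn (fun s : ℝ => s * φ s) (Icc 0 r_o) :=
    strictMonoOn_of_deriv_pos (convex_Icc _ _) hgd.continuous.continuousOn
      (fun w hw => hg'pos w (by rwa [interior_Icc] at hw))
  have hganti : StrictAntiOn (fun s : ℝ => s * φ s) (Icc r_o R) :=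
    strictAntiOn_of_deriv_neg (convex_Icc _ _) hgd.continuous.continuousOn
      (fun w hw => hg'neg w (by rwa [interior_Icc] at hw))
  -- value equality implies coordinate equality
  have heqg : ∀ u ∈ Ioo (0:ℝ) R, u * φ u = r_o * φ r_o → u = r_o := by
    intro u hu h
    rcases lt_trichotomy u r_o with hlt | he | hgt
    · have := hgmono (⟨hu.1.le, hlt.le⟩ : u ∈ Icc 0 r_o)
        (⟨hro.1.le, le_refl r_o⟩ : r_o ∈ Icc 0 r_o) hlt
      simp only at this; linarith
    · exact he
    · have := hganti (⟨le_refl r_o, hro.2.le⟩ : r_o ∈ Icc r_o R)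
        (⟨hgt.le, hu.2.le⟩ : u ∈ Icc r_o R) hgt
      simp only at this; linarith
  have heqψ : ∀ u ∈ Ioo (0:ℝ) H, ψ u = ψ z_o → u = z_o := by
    intro u hu h
    rcases lt_trichotomy u z_o with hlt | he | hgt
    · have := hψmono (⟨hu.1.le, hlt.le⟩ : u ∈ Icc 0 z_o)
        (⟨hzo.1.le, le_refl z_o⟩ : z_o ∈ Icc 0 z_o) hlt
      linarith
    · exact he
    · have := hψanti (⟨le_refl z_o, hzo.2.le⟩ : z_o ∈ Icc z_o H)
        (⟨hgt.le, hu.2.le⟩ : u ∈ Icc z_o H) hgt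
      linarith
  -- conservation of circulation
  have hE : ∀ t, HasDerivAt (fun t => (c t).1 * φ (c t).1 * ψ (c t).2) 0 t := by
    intro t
    have h1 : HasDerivAt (fun t => (c t).1 * φ (c t).1)
        (deriv (fun s => s * φ s) (c t).1 * -(φ (c t).1 * deriv ψ (c t).2)) t :=
      ((hgd ((c t).1)).hasDerivAt).comp (h₂ := fun s => s * φ s) t (hr t)
    have h2 : HasDerivAt (fun t => ψ (c t).2)
        (deriv ψ (c t).2 * (deriv (fun s => s * φ s) (c t).1 * ψ (c t).2 / (c t).1)) t :=
      ((hψd ((c t).2)).hasDerivAt).comp t (hzdt t)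
    have h3 := h1.mul h2
    refine h3.congr_deriv ?_
    have hne : (c t).1 ≠ 0 := ne_of_gt (hpos t (mem_univ t))
    have hinv : (c t).1 * ((c t).1)⁻¹ = 1 := mul_inv_cancel₀ hne
    simp only [div_eq_mul_inv]
    linear_combination (deriv (fun s => s * φ s) (c t).1 * φ (c t).1 * deriv ψ (c t).2 * ψ (c t).2) * hinv
  have hEconst : ∀ t, (c t).1 * φ (c t).1 * ψ (c t).2 = (c 0).1 * φ (c 0).1 * ψ (c 0).2 :=
    fun t => is_const_of_deriv_eq_zero
      (fun u => (hE u).differentiableAt) (fun u => (hE u).deriv) t 0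
  -- positivity of basic quantities
  have hgro_pos : 0 < r_o * φ r_o := mul_pos hro.1 (hφpos r_o hro)
  have hψzo_pos : 0 < ψ z_o := hψpos z_o hzo
  rcases lt_trichotomy z₁ z_o with hcase | hcase | hcase
  · -- z₁ < z_o : direct application of full_loop
    obtain ⟨T, hT0, hxT, hyT⟩ :=
      full_loop K hK
        (fun p => -(φ p.1 * deriv ψ p.2))
        (fun p => deriv (fun s => s * φ s) p.1 * ψ p.2 / p.1)
        (((hφC2.continuous.comp continuous_fst).mul (hψdc.comp continuous_snd)).neg.continuousOn)
        (ContinuousOn.div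
          (((hgdc.comp continuous_fst).mul (hψC2.continuous.comp continuous_snd)).continuousOn)
          continuous_fst.continuousOn
          (fun p hp => ne_of_gt (hKsub hp).1.1))
        r_o z_o
        (fun p hp hlt => by
          have hp' := hKsub hp
          have h := mul_pos (hφpos p.1 hp'.1) (hψ'pos p.2 ⟨hp'.2.1, hlt⟩)
          show -(φ p.1 * deriv ψ p.2) < 0
          linarith)
        (fun p hp hlt => by
          have hp' := hKsub hp
          have h := mul_neg_of_pos_of_neg (hφpos p.1 hp'.1) (hψ'neg p.2 ⟨hlt, hp'.2.2⟩)
          show 0 < -(φ p.1 * deriv ψ p.2)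
          linarith)
        (fun p hp hlt => by
          have hp' := hKsub hp
          show 0 < deriv (fun s => s * φ s) p.1 * ψ p.2 / p.1
          exact div_pos (mul_pos (hg'pos p.1 ⟨hp'.1.1, hlt⟩) (hψpos p.2 hp'.2)) hp'.1.1)
        (fun p hp hlt => by
          have hp' := hKsub hp
          show deriv (fun s => s * φ s) p.1 * ψ p.2 / p.1 < 0
          exact div_neg_of_neg_of_pos
            (mul_neg_of_neg_of_pos (hg'neg p.1 ⟨hlt, hp'.1.2⟩) (hψpos p.2 hp'.2)) hp'.1.1)
        (fun p hp e1 e2 => by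
          have hp' := hKsub hp
          have e1' : -(φ p.1 * deriv ψ p.2) = 0 := e1
          have e2' : deriv (fun s => s * φ s) p.1 * ψ p.2 / p.1 = 0 := e2
          have hd : deriv ψ p.2 = 0 := by
            have hφne : φ p.1 ≠ 0 := ne_of_gt (hφpos p.1 hp'.1)
            have := neg_eq_zero.mp e1'
            rcases mul_eq_zero.mp this with h | h
            · exact absurd h hφne
            · exact h
          have hp2 : p.2 = z_o := by
            by_contra hne2
            exact hψ'ne p.2 hp'.2 hne2 hd
          have hg0 : deriv (fun s => s * φ s) p.1 = 0 := by
            have hne1 : (p.1 : ℝ) ≠ 0 := ne_of_gt hp'.1.1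
            have := (div_eq_zero_iff.mp e2').resolve_right hne1
            rcases mul_eq_zero.mp this with h | h
            · exact h
            · exact absurd h (ne_of_gt (hψpos p.2 hp'.2))
          have hp1 : p.1 = r_o := by
            by_contra hne1
            exact hg'ne p.1 hp'.1 hne1 hg0
          exact Prod.ext hp1 hp2)
        (fun t => (c t).1) (fun t => (c t).2)
        hr hzdt
        (fun t => by simpa using hcK t)
        (by show (c 0).1 = r_o; rw [hc0]) (by show (c 0).2 < z_o; rw [hc0]; exact hcase)
    have hcons := hEconst T
    rw [hc0] at hcons
    simp only [hxT] at hcons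
    have hψeq : ψ (c T).2 = ψ z₁ := by
      have : r_o * φ r_o * ψ (c T).2 = r_o * φ r_o * ψ z₁ := by linarith [hcons]
      exact mul_left_cancel₀ (ne_of_gt hgro_pos) this
    have hzT : (c T).2 = z₁ := by
      have hmem1 : (c T).2 ∈ Icc (0:ℝ) z_o := ⟨(hKsub (hcK T)).2.1.le, hyT.le⟩
      have hmem2 : z₁ ∈ Icc (0:ℝ) z_o := ⟨hz₁.1.le, hcase.le⟩
      exact hψmono.injOn hmem1 hmem2 hψeq
    exact ⟨T, hT0, by rw [hc0]; exact Prod.ext hxT hzT⟩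
  · -- z₁ = z_o : the curve is constant at the equilibrium
    have hmax_eq : ∀ p : ℝ × ℝ, p ∈ Ioo (0:ℝ) R ×ˢ Ioo (0:ℝ) H →
        p.1 * φ p.1 * ψ p.2 = r_o * φ r_o * ψ z_o → p = (r_o, z_o) := by
      intro p hp heqΓ
      have hgp_le := hgmax p.1 hp.1
      have hψp_le := hψmax p.2 hp.2
      have hgppos : 0 < p.1 * φ p.1 := mul_pos hp.1.1 (hφpos p.1 hp.1)
      have hψppos := hψpos p.2 hp.2
      have hA : r_o * φ r_o * ψ p.2 ≤ r_o * φ r_o * ψ z_o :=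
        mul_le_mul_of_nonneg_left hψp_le hgro_pos.le
      have hB : p.1 * φ p.1 * ψ p.2 ≤ r_o * φ r_o * ψ p.2 :=
        mul_le_mul_of_nonneg_right hgp_le hψppos.le
      have h2 : ψ p.2 = ψ z_o :=
        mul_left_cancel₀ (ne_of_gt hgro_pos) (le_antisymm hA (by linarith))
      have h1 : p.1 * φ p.1 = r_o * φ r_o := by
        rw [h2] at heqΓ
        exact mul_right_cancel₀ (ne_of_gt hψzo_pos) heqΓ
      exact Prod.ext (heqg p.1 hp.1 h1) (heqψ p.2 hp.2 h2)
    have hcall : ∀ t, c t = (r_o, z_o) := by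
      intro t
      apply hmax_eq (c t) (hKsub (hcK t))
      have := hEconst t
      rw [hc0] at this
      simpa [hcase] using this
    exact ⟨1, one_pos, by rw [hcall 1, hcall 0]⟩
  · -- z_o < z₁ : apply full_loop to the reflected curve
    obtain ⟨T, hT0, hxT, hyT⟩ :=
      full_loop ((fun p : ℝ × ℝ => ((2*r_o - p.1 : ℝ), (2*z_o - p.2 : ℝ))) '' K)
        (hK.image (by fun_prop))
        (fun q => φ (2*r_o - q.1) * deriv ψ (2*z_o - q.2))
        (fun q => -(deriv (fun s => s * φ s) (2*r_o - q.1) * ψ (2*z_o - q.2) / (2*r_o - q.1)))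
        (((hφC2.continuous.comp (by fun_prop)).mul (hψdc.comp (by fun_prop))).continuousOn)
        (ContinuousOn.neg (ContinuousOn.div
          (((hgdc.comp (by fun_prop)).mul (hψC2.continuous.comp (by fun_prop))).continuousOn)
          ((by fun_prop : Continuous (fun q : ℝ × ℝ => (2*r_o - q.1 : ℝ))).continuousOn)
          (by
            rintro q ⟨⟨p1, p2⟩, hp, rfl⟩
            show (2*r_o - (2*r_o - p1) : ℝ) ≠ 0
            rw [show (2*r_o - (2*r_o - p1) : ℝ) = p1 from by ring]
            exact ne_of_gt (hKsub hp).1.1)))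
        r_o z_o
        (by
          rintro q ⟨⟨p1, p2⟩, hp, rfl⟩ hlt
          have hp' := hKsub hp
          have hlt' : 2*z_o - p2 < z_o := hlt
          show φ (2*r_o - (2*r_o - p1)) * deriv ψ (2*z_o - (2*z_o - p2)) < 0
          rw [show (2*r_o - (2*r_o - p1) : ℝ) = p1 from by ring,
            show (2*z_o - (2*z_o - p2) : ℝ) = p2 from by ring]
          exact mul_neg_of_pos_of_neg (hφpos p1 hp'.1) (hψ'neg p2 ⟨by linarith, hp'.2.2⟩))
        (by
          rintro q ⟨⟨p1, p2⟩, hp, rfl⟩ hlt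
          have hp' := hKsub hp
          have hlt' : z_o < 2*z_o - p2 := hlt
          show 0 < φ (2*r_o - (2*r_o - p1)) * deriv ψ (2*z_o - (2*z_o - p2))
          rw [show (2*r_o - (2*r_o - p1) : ℝ) = p1 from by ring,
            show (2*z_o - (2*z_o - p2) : ℝ) = p2 from by ring]
          exact mul_pos (hφpos p1 hp'.1) (hψ'pos p2 ⟨hp'.2.1, by linarith⟩))
        (by
          rintro q ⟨⟨p1, p2⟩, hp, rfl⟩ hlt
          have hp' := hKsub hp
          have hlt' : 2*r_o - p1 < r_o := hlt
          show 0 < -(deriv (fun s => s * φ s) (2*r_o - (2*r_o - p1)) * ψ (2*z_o - (2*z_o - p2))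
            / (2*r_o - (2*r_o - p1)))
          rw [show (2*r_o - (2*r_o - p1) : ℝ) = p1 from by ring,
            show (2*z_o - (2*z_o - p2) : ℝ) = p2 from by ring]
          have := div_neg_of_neg_of_pos
            (mul_neg_of_neg_of_pos (hg'neg p1 ⟨by linarith, hp'.1.2⟩) (hψpos p2 hp'.2)) hp'.1.1
          linarith)
        (by
          rintro q ⟨⟨p1, p2⟩, hp, rfl⟩ hlt
          have hp' := hKsub hp
          have hlt' : r_o < 2*r_o - p1 := hlt
          show -(deriv (fun s => s * φ s) (2*r_o - (2*r_o - p1)) * ψ (2*z_o - (2*z_o - p2))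
            / (2*r_o - (2*r_o - p1))) < 0
          rw [show (2*r_o - (2*r_o - p1) : ℝ) = p1 from by ring,
            show (2*z_o - (2*z_o - p2) : ℝ) = p2 from by ring]
          have := div_pos (mul_pos (hg'pos p1 ⟨hp'.1.1, by linarith⟩) (hψpos p2 hp'.2)) hp'.1.1
          linarith)
        (by
          rintro q ⟨⟨p1, p2⟩, hp, rfl⟩ e1 e2
          have hp' := hKsub hp
          have e1' : φ (2*r_o - (2*r_o - p1)) * deriv ψ (2*z_o - (2*z_o - p2)) = 0 := e1
          have e2' : -(deriv (fun s => s * φ s) (2*r_o - (2*r_o - p1)) *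
            ψ (2*z_o - (2*z_o - p2)) / (2*r_o - (2*r_o - p1))) = 0 := e2
          rw [show (2*r_o - (2*r_o - p1) : ℝ) = p1 from by ring,
            show (2*z_o - (2*z_o - p2) : ℝ) = p2 from by ring] at e1' e2'
          have hd : deriv ψ p2 = 0 :=
            (mul_eq_zero.mp e1').resolve_left (ne_of_gt (hφpos p1 hp'.1))
          have hp2 : p2 = z_o := by
            by_contra hne2
            exact hψ'ne p2 hp'.2 hne2 hd
          have hg0 : deriv (fun s => s * φ s) p1 = 0 := by
            have := (div_eq_zero_iff.mp (neg_eq_zero.mp e2')).resolve_right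
              (ne_of_gt hp'.1.1)
            exact (mul_eq_zero.mp this).resolve_right (ne_of_gt (hψpos p2 hp'.2))
          have hp1 : p1 = r_o := by
            by_contra hne1
            exact hg'ne p1 hp'.1 hne1 hg0
          exact Prod.ext (by show 2*r_o - p1 = r_o; rw [hp1]; ring)
            (by show 2*z_o - p2 = z_o; rw [hp2]; ring))
        (fun t => 2*r_o - (c t).1) (fun t => 2*z_o - (c t).2)
        (by
          intro t
          show HasDerivAt _
            (φ (2*r_o - (2*r_o - (c t).1)) * deriv ψ (2*z_o - (2*z_o - (c t).2))) t
          rw [show (2*r_o - (2*r_o - (c t).1) : ℝ) = (c t).1 from by ring,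
            show (2*z_o - (2*z_o - (c t).2) : ℝ) = (c t).2 from by ring]
          have h := (hr t).const_sub (2*r_o)
          simpa using h)
        (by
          intro t
          show HasDerivAt _
            (-(deriv (fun s => s * φ s) (2*r_o - (2*r_o - (c t).1)) *
              ψ (2*z_o - (2*z_o - (c t).2)) / (2*r_o - (2*r_o - (c t).1)))) t
          rw [show (2*r_o - (2*r_o - (c t).1) : ℝ) = (c t).1 from by ring,
            show (2*z_o - (2*z_o - (c t).2) : ℝ) = (c t).2 from by ring]
          exact (hzdt t).const_sub (2*z_o))
        (fun t => ⟨c t, hcK t, rfl⟩)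
        (by show 2*r_o - (c 0).1 = r_o; rw [hc0]; show 2*r_o - r_o = r_o; ring)
        (by show 2*z_o - (c 0).2 < z_o; rw [hc0]; show 2*z_o - z₁ < z_o; linarith)
    have h1 : (c T).1 = r_o := by
      have h := hxT
      linarith [h]
    have h2 : z_o < (c T).2 := by
      have h : 2*z_o - (c T).2 < z_o := hyT
      linarith
    have hcons := hEconst T
    rw [hc0] at hcons
    have hψeq : ψ (c T).2 = ψ z₁ := by
      have hc2 : r_o * φ r_o * ψ (c T).2 = r_o * φ r_o * ψ z₁ := by
        rw [h1] at hcons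
        simpa using hcons
      exact mul_left_cancel₀ (ne_of_gt hgro_pos) hc2
    have hzT : (c T).2 = z₁ :=
      hψanti.injOn ⟨h2.le, (hKsub (hcK T)).2.2.le⟩ ⟨hcase.le, hz₁.2.le⟩ hψeq
    exact ⟨T, hT0, by rw [hc0]; exact Prod.ext h1 hzT⟩
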